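/- Let K be a commutative ring equipped with a family (d_i)_{i ∈ Δ} of derivations, assume K is simple (its only Δ-ideals are (0) and K), and let C = {λ ∈ K : d_i λ = 0 for all i} be its field of constants (a field by simplicity; assume it is a field). Let A be a commutative C-algebra, and let φ : K → C be a C-algebra homomorphism (a ring homomorphism with φ(c) = c for all c ∈ C). Equip A ⊗_C K with the derivations (D_i) characterized by D_i(a ⊗ λ) = a ⊗ d_i(λ). Define i : A → A ⊗_C K, a ↦ a ⊗ 1, and j : A ⊗_C K → A the ring homomorphism with j(a ⊗ λ) = a·φ(λ). Then: (1) for every Δ-ideal J of A ⊗_C K, i⁻¹(J) = j(J) (the set-theoretic image of J under j, which is an ideal since j is surjective); (2) for every ideal I of A, (j⁻¹(I))_# equals the ideal of A ⊗_C K generated by i(I), where for an ideal M of A ⊗_C K, M_# := {x : θ(x) ∈ M for every finite composition θ of the derivations D_i, including the identity} is the largest Δ-ideal contained in M. -/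

import Mathlib

open scoped TensorProduct

set_option synthInstance.maxHeartbeats 1000000
set_option maxHeartbeats 1000000

/-- The subring of constants of a commutative ring equipped with a family of
derivations. -/
def constants {K Δ : Type*} [CommRing K] (d : Δ → Derivation ℤ K K) : Subring K where
  carrier := {x : K | ∀ i, d i x = 0}
  zero_mem' := fun i => map_zero (d i)
  one_mem' := fun i => (d i).map_one_eq_zero
  add_mem' := fun ha hb i => by rw [map_add, ha i, hb i, add_zero]
  neg_mem' := fun ha i => by rw [map_neg, ha i, neg_zero]
  mul_mem' := fun {a b} ha hb i => by
    rw [(d i).leibniz, ha i, hb i, smul_zero, smul_zero, add_zero]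

/-- The canonical map `i : A → A ⊗_C K`, `a ↦ a ⊗ 1`. -/
noncomputable def inclLeft (C : Type*) [CommRing C] (A K : Type*) [CommRing A]
    [CommRing K] [Algebra C A] [Algebra C K] : A →+* A ⊗[C] K :=
  Algebra.TensorProduct.includeLeftRingHom

/-- The composition `D_{i₁} ∘ ⋯ ∘ D_{iₙ}` of the derivations of the family `D`
indexed by the word `l` (the empty word giving the identity map). -/
def derWord {R Δ : Type*} [CommRing R] (D : Δ → Derivation ℤ R R) (l : List Δ) :
    R → R :=
  l.foldr (fun i (f : R → R) => ⇑(D i) ∘ f) id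


section Generic
variable {C : Type*} [Field C] {K : Type*} [CommRing K] [Algebra C K] [Nontrivial K]
variable {Δ : Type*}

lemma constants_lemma' (dl : Δ → K →ₗ[C] K)
    (hker : ∀ k : K, (∀ i, dl i k = 0) → ∃ c : C, k = algebraMap C K c)
    {M : Type*} [AddCommGroup M] [Module C M] (y : M ⊗[C] K)
    (h : ∀ i, LinearMap.lTensor M (dl i) y = 0) : ∃ m : M, y = m ⊗ₜ[C] 1 := by
  classical
  let b := Module.Basis.ofVectorSpace C M
  let e : M ⊗[C] K ≃ₗ[C] (Module.Basis.ofVectorSpaceIndex C M →₀ K) :=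
    (TensorProduct.congr b.repr (LinearEquiv.refl C K)).trans
      (TensorProduct.finsuppScalarLeft C K _)
  have he : ∀ (m : M) (lam : K) s, e (m ⊗ₜ lam) s = b.repr m s • lam := by
    intro m lam s
    simp [e, TensorProduct.finsuppScalarLeft_apply_tmul_apply]
  have hcomm : ∀ i (z : M ⊗[C] K) s, e (LinearMap.lTensor M (dl i) z) s = dl i (e z s) := by
    intro i z s
    induction z using TensorProduct.induction_on with
    | zero => simp
    | tmul m lam =>
      rw [LinearMap.lTensor_tmul, he, he, map_smul]
    | add z w hz hw => simp [map_add, Finsupp.add_apply, hz, hw]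
  have hconst : ∀ s, ∀ i, dl i (e y s) = 0 := by
    intro s i
    rw [← hcomm i y s, h i]
    simp
  have hinj : Function.Injective (algebraMap C K) := (algebraMap C K).injective
  let f : K → C := fun k => if hk : ∀ i, dl i k = 0 then Classical.choose (hker k hk) else 0
  have hfval : ∀ k (hk : ∀ i, dl i k = 0), algebraMap C K (f k) = k := by
    intro k hk
    simp only [f, dif_pos hk]
    exact (Classical.choose_spec (hker k hk)).symm
  have hf0 : f 0 = 0 := by
    apply hinj
    rw [map_zero]
    exact hfval 0 (fun i => map_zero (dl i))
  refine ⟨b.repr.symm ((e y).mapRange f hf0), ?_⟩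
  apply e.injective
  ext s
  rw [he]
  simp only [LinearEquiv.apply_symm_apply, Finsupp.mapRange_apply]
  rw [Algebra.smul_def, mul_one]
  exact (hfval _ (hconst s)).symm

end Generic

section CR
variable {C : Type*} [CommRing C] {K : Type*} [CommRing K] [Algebra C K]
variable {A : Type*} [CommRing A] [Algebra C A]

/-- The extension of an ideal `I ⊆ A` to `A ⊗ K`, realized as the range of `rTensor`. -/
noncomputable def extIdeal (I : Ideal A) : Ideal (A ⊗[C] K) :=
  { (LinearMap.range (LinearMap.rTensor K (I.restrictScalars C).subtype)).toAddSubmonoid with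
    smul_mem' := by
      rintro c x ⟨z, rfl⟩
      induction z using TensorProduct.induction_on with
      | zero =>
        refine ⟨0, ?_⟩
        simp [smul_eq_mul]
      | tmul p lam =>
        rw [LinearMap.rTensor_tmul]
        induction c using TensorProduct.induction_on with
        | zero => exact ⟨0, by simp⟩
        | tmul a mu =>
          refine ⟨(⟨a * p.1, I.mul_mem_left a p.2⟩ : I.restrictScalars C) ⊗ₜ[C] (mu * lam), ?_⟩
          rw [LinearMap.rTensor_tmul]
          simp [smul_eq_mul, Algebra.TensorProduct.tmul_mul_tmul]
        | add c₁ c₂ h₁ h₂ =>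
          obtain ⟨z₁, hz₁⟩ := h₁
          obtain ⟨z₂, hz₂⟩ := h₂
          refine ⟨z₁ + z₂, ?_⟩
          rw [map_add, hz₁, hz₂, smul_eq_mul, smul_eq_mul, smul_eq_mul, add_mul]
      | add z₁ z₂ h₁ h₂ =>
        obtain ⟨w₁, hw₁⟩ := h₁
        obtain ⟨w₂, hw₂⟩ := h₂
        refine ⟨w₁ + w₂, ?_⟩
        rw [map_add, hw₁, hw₂, smul_eq_mul, smul_eq_mul, smul_eq_mul, map_add, mul_add] }

lemma mem_extIdeal {I : Ideal A} {x : A ⊗[C] K} :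
    x ∈ extIdeal I ↔ ∃ z, LinearMap.rTensor K (I.restrictScalars C).subtype z = x :=
  Iff.rfl

lemma extIdeal_eq_map (I : Ideal A) :
    extIdeal I = I.map (Algebra.TensorProduct.includeLeftRingHom (R := C) (A := A) (B := K)) := by
  apply le_antisymm
  · rintro x ⟨z, rfl⟩
    induction z using TensorProduct.induction_on with
    | zero => simp only [map_zero]; exact Ideal.zero_mem _
    | tmul p lam =>
      rw [LinearMap.rTensor_tmul]
      have h1 : Algebra.TensorProduct.includeLeftRingHom (R := C) (A := A) (B := K) p.1 ∈
          I.map (Algebra.TensorProduct.includeLeftRingHom (R := C)) :=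
        Ideal.mem_map_of_mem _ p.2
      have h2 := Ideal.mul_mem_left _ ((1 : A) ⊗ₜ[C] lam) h1
      rw [Algebra.TensorProduct.includeLeftRingHom_apply,
        Algebra.TensorProduct.tmul_mul_tmul, one_mul, mul_one] at h2
      exact h2
    | add z₁ z₂ h₁ h₂ => rw [map_add]; exact Ideal.add_mem _ h₁ h₂
  · rw [Ideal.map_le_iff_le_comap]
    intro b hb
    refine ⟨(⟨b, hb⟩ : I.restrictScalars C) ⊗ₜ[C] 1, ?_⟩
    rw [LinearMap.rTensor_tmul]
    rfl

lemma rTensor_lTensor_comm {M N : Type*} [AddCommGroup M] [Module C M] [AddCommGroup N]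
    [Module C N] (f : M →ₗ[C] N) (g : K →ₗ[C] K) (z : M ⊗[C] K) :
    LinearMap.rTensor K f (LinearMap.lTensor M g z) =
      LinearMap.lTensor N g (LinearMap.rTensor K f z) := by
  rw [← LinearMap.comp_apply, ← LinearMap.comp_apply, LinearMap.rTensor_comp_lTensor,
    LinearMap.lTensor_comp_rTensor]

lemma exists_rep (x : A ⊗[C] K) :
    ∃ (n : ℕ) (a : Fin n → A) (lam : Fin n → K), x = ∑ k, a k ⊗ₜ[C] lam k := by
  induction x using TensorProduct.induction_on with
  | zero => exact ⟨0, Fin.elim0, Fin.elim0, by simp⟩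
  | tmul a c => exact ⟨1, fun _ => a, fun _ => c, by simp⟩
  | add x y hx hy =>
    obtain ⟨n, a, lam, rfl⟩ := hx
    obtain ⟨n', a', lam', rfl⟩ := hy
    refine ⟨n + n', Fin.append a a', Fin.append lam lam', ?_⟩
    rw [Fin.sum_univ_add]
    simp [Fin.append_left, Fin.append_right]

end CR

section FieldSec
variable {C : Type*} [Field C] {K : Type*} [CommRing K] [Algebra C K] [Nontrivial K]
variable {Δ : Type*} {A : Type*} [CommRing A] [Algebra C A]

lemma lemL (dl : Δ → K →ₗ[C] K)
    (hker : ∀ k : K, (∀ i, dl i k = 0) → ∃ c : C, k = algebraMap C K c)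
    (I : Ideal A) (x : A ⊗[C] K)
    (hx : ∀ i, LinearMap.lTensor A (dl i) x ∈
      I.map (Algebra.TensorProduct.includeLeftRingHom (R := C) (A := A) (B := K))) :
    ∃ b : A, x - b ⊗ₜ[C] 1 ∈
      I.map (Algebra.TensorProduct.includeLeftRingHom (R := C) (A := A) (B := K)) := by
  set p := I.restrictScalars C with hp
  set Q := LinearMap.rTensor K p.mkQ with hQdef
  have hexact := Module.Flat.rTensor_exact (M := K) (LinearMap.exact_subtype_mkQ p)
  have hker0 : ∀ y : A ⊗[C] K, Q y = 0 ↔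
      y ∈ I.map (Algebra.TensorProduct.includeLeftRingHom (R := C) (A := A) (B := K)) := by
    intro y
    rw [← extIdeal_eq_map]
    constructor
    · intro h
      obtain ⟨z, hz⟩ := (hexact y).mp h
      exact ⟨z, hz⟩
    · rintro ⟨z, rfl⟩
      exact (hexact _).mpr ⟨z, rfl⟩
  have hQx : ∀ i, LinearMap.lTensor (A ⧸ p) (dl i) (Q x) = 0 := by
    intro i
    rw [← rTensor_lTensor_comm]
    exact (hker0 _).mpr (hx i)
  obtain ⟨m, hm⟩ := constants_lemma' dl hker (Q x) hQx
  obtain ⟨b, rfl⟩ := p.mkQ_surjective m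
  refine ⟨b, (hker0 _).mp ?_⟩
  rw [map_sub, hm, hQdef, LinearMap.rTensor_tmul, sub_self]

end FieldSec

lemma tmul_mul_tmul' {C : Type*} [CommRing C] {K A : Type*} [CommRing K] [Algebra C K]
    [CommRing A] [Algebra C A] (a₁ a₂ : A) (b₁ b₂ : K) :
    (a₁ ⊗ₜ[C] b₁) * (a₂ ⊗ₜ[C] b₂) = (a₁ * a₂) ⊗ₜ[C] (b₁ * b₂) := by
  rw [Algebra.TensorProduct.tmul_mul_tmul]

section ThmS
variable {C : Type*} [Field C] {K : Type*} [CommRing K] [Algebra C K] [Nontrivial K]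
variable {Δ : Type*} {A : Type*} [CommRing A] [Algebra C A]

theorem thmS (dl : Δ → K →ₗ[C] K)
    (hsimple : ∀ T : Ideal K, (∀ i, ∀ x ∈ T, dl i x ∈ T) → T = ⊥ ∨ T = ⊤)
    (hker : ∀ k : K, (∀ i, dl i k = 0) → ∃ c : C, k = algebraMap C K c)
    (hone : ∀ i, dl i 1 = 0)
    (J : Ideal (A ⊗[C] K)) (hJ : ∀ i, ∀ x ∈ J, LinearMap.lTensor A (dl i) x ∈ J) :
    J ≤ (J.comap (Algebra.TensorProduct.includeLeftRingHom (R := C) (A := A) (B := K))).map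
      (Algebra.TensorProduct.includeLeftRingHom (R := C) (A := A) (B := K)) := by
  set incl := Algebra.TensorProduct.includeLeftRingHom (R := C) (A := A) (B := K) with hincl
  set E := (J.comap incl).map incl with hE
  have hEJ : E ≤ J := Ideal.map_le_iff_le_comap.mpr le_rfl
  have key : ∀ n : ℕ, ∀ (a : Fin n → A) (lam : Fin n → K),
      (∑ k, a k ⊗ₜ[C] lam k) ∈ J → (∑ k, a k ⊗ₜ[C] lam k) ∈ E := by
    intro n
    induction n using Nat.strong_induction_on with
    | _ n IH =>
      intro a lam hmem
      obtain _ | m := n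
      · simpa using E.zero_mem
      rw [Fin.sum_univ_succ] at hmem ⊢
      by_cases h0 : lam 0 = 0
      · rw [h0, TensorProduct.tmul_zero, zero_add] at hmem ⊢
        exact IH m (Nat.lt_succ_self m) _ _ hmem
      -- the ideal T of K
      have Tadd : ∀ {μ₁ μ₂ : K},
          (∃ ν : Fin m → K, a 0 ⊗ₜ[C] μ₁ + ∑ k : Fin m, a k.succ ⊗ₜ[C] ν k ∈ J) →
          (∃ ν : Fin m → K, a 0 ⊗ₜ[C] μ₂ + ∑ k : Fin m, a k.succ ⊗ₜ[C] ν k ∈ J) →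
          (∃ ν : Fin m → K, a 0 ⊗ₜ[C] (μ₁ + μ₂) + ∑ k : Fin m, a k.succ ⊗ₜ[C] ν k ∈ J) := by
        rintro μ₁ μ₂ ⟨ν₁, h₁⟩ ⟨ν₂, h₂⟩
        refine ⟨ν₁ + ν₂, ?_⟩
        have := J.add_mem h₁ h₂
        rw [add_add_add_comm] at this
        simpa [TensorProduct.tmul_add, Finset.sum_add_distrib] using this
      set T : Ideal K :=
        { carrier := {μ | ∃ ν : Fin m → K,
            a 0 ⊗ₜ[C] μ + ∑ k : Fin m, a k.succ ⊗ₜ[C] ν k ∈ J},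
          zero_mem' := ⟨0, by simpa using J.zero_mem⟩,
          add_mem' := fun h₁ h₂ => Tadd h₁ h₂,
          smul_mem' := by
            rintro c μ ⟨ν, h⟩
            refine ⟨fun k => c * ν k, ?_⟩
            have h2 := J.mul_mem_left ((1 : A) ⊗ₜ[C] c) h
            rw [mul_add, Finset.mul_sum] at h2
            simp only [tmul_mul_tmul', one_mul] at h2
            simpa [smul_eq_mul] using h2 } with hT
      have hTstab : ∀ i, ∀ μ ∈ T, dl i μ ∈ T := by
        rintro i μ ⟨ν, h⟩
        refine ⟨fun k => dl i (ν k), ?_⟩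
        have h2 := hJ i _ h
        rw [map_add, map_sum] at h2
        simpa [LinearMap.lTensor_tmul] using h2
      have hlam0 : lam 0 ∈ T := ⟨fun k => lam k.succ, hmem⟩
      have hTtop : T = ⊤ := by
        rcases hsimple T hTstab with hbot | htop
        · exact absurd (hbot ▸ hlam0) (by simpa using h0)
        · exact htop
      have h1T : (1 : K) ∈ T := hTtop ▸ Submodule.mem_top
      obtain ⟨ν, hy⟩ := h1T
      -- y := a 0 ⊗ 1 + ∑ a k.succ ⊗ ν k ∈ J, and D i y ∈ E
      have hDy : ∀ i, (∑ k : Fin m, a k.succ ⊗ₜ[C] dl i (ν k)) ∈ E := by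
        intro i
        have h2 := hJ i _ hy
        rw [map_add, map_sum] at h2
        simp only [LinearMap.lTensor_tmul, hone, TensorProduct.tmul_zero, zero_add] at h2
        exact IH m (Nat.lt_succ_self m) _ _ h2
      -- apply lemL to y
      have hyE : (a 0 ⊗ₜ[C] 1 + ∑ k : Fin m, a k.succ ⊗ₜ[C] ν k) ∈ E := by
        obtain ⟨b, hb⟩ := lemL dl hker (J.comap incl)
          (a 0 ⊗ₜ[C] 1 + ∑ k : Fin m, a k.succ ⊗ₜ[C] ν k) (by
            intro i
            rw [map_add, map_sum]
            simp only [LinearMap.lTensor_tmul, hone, TensorProduct.tmul_zero, zero_add]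
            exact hDy i)
        have hbJ : (b ⊗ₜ[C] 1 : A ⊗[C] K) ∈ J := by
          have := J.sub_mem hy (hEJ hb)
          simpa using this
        have hbE : (b ⊗ₜ[C] 1 : A ⊗[C] K) ∈ E := Ideal.mem_map_of_mem incl hbJ
        have := E.add_mem hb hbE
        simpa using this
      -- conclude
      have hprod : ((1 : A) ⊗ₜ[C] lam 0) * (a 0 ⊗ₜ[C] 1 + ∑ k : Fin m, a k.succ ⊗ₜ[C] ν k) =
          a 0 ⊗ₜ[C] lam 0 + ∑ k : Fin m, a k.succ ⊗ₜ[C] (lam 0 * ν k) := by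
        rw [mul_add, Finset.mul_sum]
        simp [tmul_mul_tmul']
      have hx' : (∑ k : Fin m, a k.succ ⊗ₜ[C] (lam k.succ - lam 0 * ν k)) ∈ J := by
        have h3 := J.sub_mem hmem (J.mul_mem_left ((1 : A) ⊗ₜ[C] lam 0) hy)
        rw [hprod] at h3
        have heq : a 0 ⊗ₜ[C] lam 0 + (∑ k : Fin m, a k.succ ⊗ₜ[C] lam k.succ) -
            (a 0 ⊗ₜ[C] lam 0 + ∑ k : Fin m, a k.succ ⊗ₜ[C] (lam 0 * ν k)) =
            ∑ k : Fin m, a k.succ ⊗ₜ[C] (lam k.succ - lam 0 * ν k) := by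
          simp only [TensorProduct.tmul_sub, Finset.sum_sub_distrib]
          abel
        rwa [heq] at h3
      have hx'E := IH m (Nat.lt_succ_self m) _ _ hx'
      have hfin : a 0 ⊗ₜ[C] lam 0 + (∑ k : Fin m, a k.succ ⊗ₜ[C] lam k.succ) =
          (∑ k : Fin m, a k.succ ⊗ₜ[C] (lam k.succ - lam 0 * ν k)) +
          ((1 : A) ⊗ₜ[C] lam 0) * (a 0 ⊗ₜ[C] 1 + ∑ k : Fin m, a k.succ ⊗ₜ[C] ν k) := by
        rw [hprod]
        simp only [TensorProduct.tmul_sub, Finset.sum_sub_distrib]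
        abel
      rw [hfin]
      exact E.add_mem hx'E (E.mul_mem_left _ hyE)
  intro x hx
  obtain ⟨n, a, lam, rfl⟩ := exists_rep x
  exact key n a lam hx

end ThmS

section DerWordLemmas
variable {R Δ : Type*} [CommRing R] (D : Δ → Derivation ℤ R R)

lemma derWord_nil (x : R) : derWord D [] x = x := rfl

lemma derWord_cons (i : Δ) (l : List Δ) (x : R) :
    derWord D (i :: l) x = D i (derWord D l x) := rfl

lemma derWord_zero (l : List Δ) : derWord D l 0 = 0 := by
  induction l with
  | nil => rfl
  | cons i l ih => rw [derWord_cons, ih, map_zero]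

lemma derWord_add (l : List Δ) (x y : R) :
    derWord D l (x + y) = derWord D l x + derWord D l y := by
  induction l with
  | nil => rfl
  | cons i l ih => rw [derWord_cons, ih, map_add, derWord_cons, derWord_cons]

lemma derWord_append (l₁ l₂ : List Δ) (x : R) :
    derWord D (l₁ ++ l₂) x = derWord D l₁ (derWord D l₂ x) := by
  induction l₁ with
  | nil => rfl
  | cons i l ih => rw [List.cons_append, derWord_cons, ih, derWord_cons]

end DerWordLemmas

section DSec
variable {K Δ : Type*} [CommRing K] (d : Δ → Derivation ℤ K K)

/-- `d i` as a `C`-linear endomorphism of `K`. -/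
def dCL (i : Δ) : K →ₗ[constants d] K where
  toFun := d i
  map_add' := map_add _
  map_smul' c x := by
    have hc : d i (c : K) = 0 := c.2 i
    simp only [RingHom.id_apply, Algebra.smul_def]
    have h1 : (algebraMap (constants d) K) c = (c : K) := rfl
    rw [h1, (d i).leibniz, hc, smul_eq_mul, smul_eq_mul, mul_zero, add_zero]

@[simp] lemma dCL_apply (i : Δ) (x : K) : dCL d i x = d i x := rfl

variable {A : Type*} [CommRing A] [Algebra (constants d) A]

lemma D_eq_lTensor (D : Δ → Derivation ℤ (A ⊗[constants d] K) (A ⊗[constants d] K))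
    (hD : ∀ i (a : A) (c : K), D i (a ⊗ₜ c) = a ⊗ₜ[constants d] (d i c)) (i : Δ)
    (x : A ⊗[constants d] K) : D i x = LinearMap.lTensor A (dCL d i) x := by
  induction x using TensorProduct.induction_on with
  | zero => simp
  | tmul a c => simp [hD]
  | add x y hx hy => rw [map_add, map_add, hx, hy]

end DSec

/-- Let `K` be a simple `Δ`-ring with field of constants `C`, `φ : K → C` a `C`-algebra
homomorphism, `A` a commutative `C`-algebra; equip `A ⊗_C K` with the derivations `D i`
characterized by `D i (a ⊗ λ) = a ⊗ d i λ`, and let `i : A → A ⊗_C K`, `a ↦ a ⊗ 1` and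
`j : A ⊗_C K → A`, `a ⊗ λ ↦ a·φ(λ)`. Then (1) for every `Δ`-ideal `J` of `A ⊗_C K`,
`i⁻¹(J) = j(J)`; and (2) for every ideal `I` of `A`, the largest `Δ`-ideal contained in
`j⁻¹(I)`, namely `{x : θ(x) ∈ j⁻¹(I) for every word θ in the D i's}`, is the ideal
generated by `i(I)`. -/
theorem stmt_11 {K Δ : Type*} [CommRing K] (d : Δ → Derivation ℤ K K)
    (hsimple : ∀ I : Ideal K, (∀ i, ∀ x ∈ I, d i x ∈ I) → I = ⊥ ∨ I = ⊤)
    (hC : IsField (constants d))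
    (φ : K →+* constants d) (hφ : ∀ c : constants d, φ ↑c = c)
    (A : Type*) [CommRing A] [Algebra (constants d) A]
    (D : Δ → Derivation ℤ (A ⊗[constants d] K) (A ⊗[constants d] K))
    (hD : ∀ i (a : A) (c : K), D i (a ⊗ₜ c) = a ⊗ₜ[constants d] (d i c))
    (j : A ⊗[constants d] K →+* A)
    (hj : ∀ (a : A) (c : K), j (a ⊗ₜ c) = a * algebraMap (constants d) A (φ c)) :
    (∀ J : Ideal (A ⊗[constants d] K), (∀ i, ∀ x ∈ J, D i x ∈ J) →
      (J.comap (inclLeft (constants d) A K) : Set A) = j '' J) ∧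
    (∀ I : Ideal A,
      {x : A ⊗[constants d] K | ∀ l : List Δ, derWord D l x ∈ I.comap j} =
        ↑(I.map (inclLeft (constants d) A K))) := by
  letI : Field (constants d) := hC.toField
  haveI : Nontrivial (constants d) := ⟨hC.exists_pair_ne⟩
  haveI : Nontrivial K := by
    refine ⟨⟨0, 1, fun h01 => ?_⟩⟩
    have h2 : ((0 : constants d) : K) = ((1 : constants d) : K) := by
      simpa using h01
    exact zero_ne_one (α := constants d) (Subtype.ext h2)
  have hsimple' : ∀ T : Ideal K, (∀ i, ∀ x ∈ T, dCL d i x ∈ T) → T = ⊥ ∨ T = ⊤ := hsimple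
  have hker : ∀ k : K, (∀ i, dCL d i k = 0) →
      ∃ c : constants d, k = algebraMap (constants d) K c := fun k hk => ⟨⟨k, hk⟩, rfl⟩
  have hone : ∀ i, dCL d i (1 : K) = 0 := fun i => (d i).map_one_eq_zero
  have hDl : ∀ i x, D i x = LinearMap.lTensor A (dCL d i) x := D_eq_lTensor d D hD
  simp only [inclLeft]
  set incl := Algebra.TensorProduct.includeLeftRingHom (R := constants d) (A := A) (B := K)
    with hincl
  have hia : ∀ a : A, incl a = a ⊗ₜ[constants d] 1 := fun a => rfl
  have hj1 : ∀ a : A, j (a ⊗ₜ[constants d] 1) = a := by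
    intro a
    rw [hj, map_one, map_one, mul_one]
  have hjmap : ∀ (I : Ideal A) (x : A ⊗[constants d] K), x ∈ I.map incl → j x ∈ I := by
    intro I x hx
    rw [← extIdeal_eq_map] at hx
    obtain ⟨z, rfl⟩ := hx
    induction z using TensorProduct.induction_on with
    | zero => simpa using I.zero_mem
    | tmul p lam =>
      rw [LinearMap.rTensor_tmul]
      have hps : (Submodule.subtype (I.restrictScalars (constants d))) p = (p : A) := rfl
      rw [hps, hj]
      exact I.mul_mem_right _ p.2
    | add z₁ z₂ h₁ h₂ =>
      rw [map_add, map_add]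
      exact I.add_mem h₁ h₂
  have hstab : ∀ (I : Ideal A) (i : Δ) (x : A ⊗[constants d] K), x ∈ I.map incl →
      LinearMap.lTensor A (dCL d i) x ∈ I.map incl := by
    intro I i x hx
    rw [← extIdeal_eq_map] at hx ⊢
    obtain ⟨z, rfl⟩ := hx
    exact ⟨LinearMap.lTensor _ (dCL d i) z, rTensor_lTensor_comm _ _ z⟩
  constructor
  · -- part (1)
    intro J hJ
    have hJ' : ∀ i, ∀ x ∈ J, LinearMap.lTensor A (dCL d i) x ∈ J := by
      intro i x hx
      rw [← hDl]
      exact hJ i x hx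
    have hS := thmS (dCL d) hsimple' hker hone J hJ'
    ext a
    simp only [SetLike.mem_coe, Ideal.mem_comap, Set.mem_image]
    constructor
    · intro ha
      exact ⟨incl a, ha, by rw [hia, hj1]⟩
    · rintro ⟨x, hxJ, rfl⟩
      have hxE := hS hxJ
      exact hjmap _ x hxE
  · -- part (2)
    intro I
    ext x
    simp only [Set.mem_setOf_eq, SetLike.mem_coe]
    constructor
    · intro hx
      have Nsmul : ∀ (c y : A ⊗[constants d] K), (∀ l, derWord D l y ∈ I.comap j) →
          ∀ l, derWord D l (c * y) ∈ I.comap j := by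
        intro c y hy
        set Sx : Ideal (A ⊗[constants d] K) :=
          Ideal.span (Set.range fun l => derWord D l y) with hSx
        have hgen : ∀ l, derWord D l y ∈ Sx := fun l => Ideal.subset_span ⟨l, rfl⟩
        have hstabS : ∀ i, ∀ z ∈ Sx, D i z ∈ Sx := by
          intro i z hz
          induction hz using Submodule.span_induction with
          | mem w hw =>
            obtain ⟨l, rfl⟩ := hw
            exact hgen (i :: l)
          | zero => rw [map_zero]; exact Sx.zero_mem
          | add w₁ w₂ hw₁ hw₂ ih₁ ih₂ => rw [map_add]; exact Sx.add_mem ih₁ ih₂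
          | smul c' w hw ih =>
            rw [smul_eq_mul, (D i).leibniz, smul_eq_mul, smul_eq_mul]
            exact Sx.add_mem (Sx.mul_mem_left _ ih) (Ideal.mul_mem_right _ _ hw)
        have hsub : ∀ l (t : A ⊗[constants d] K), derWord D l (t * y) ∈ Sx := by
          intro l
          induction l with
          | nil => exact fun t => Sx.mul_mem_left t (hgen [])
          | cons i l ih =>
            intro t
            erw [derWord_cons]
            exact hstabS i _ (ih t)
        intro l
        have hle : Sx ≤ I.comap j := by
          rw [hSx, Ideal.span_le]
          rintro _ ⟨l', rfl⟩
          exact hy l'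
        exact hle (hsub l c)
      set N : Ideal (A ⊗[constants d] K) :=
        { carrier := {y | ∀ l, derWord D l y ∈ I.comap j},
          zero_mem' := by
            intro l
            erw [derWord_zero]
            exact Submodule.zero_mem _,
          add_mem' := by
            intro y z hy hz l
            erw [derWord_add]
            exact Ideal.add_mem _ (hy l) (hz l),
          smul_mem' := by
            intro c y hy
            simpa [smul_eq_mul] using Nsmul c y hy } with hN
      have hmemN : ∀ y, y ∈ N ↔ ∀ l, derWord D l y ∈ I.comap j := fun y => Iff.rfl
      have hNstab : ∀ i, ∀ z ∈ N, LinearMap.lTensor A (dCL d i) z ∈ N := by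
        intro i z hz
        rw [← hDl, hmemN]
        intro l
        rw [show (D i) z = derWord D [i] z from rfl]
        erw [← derWord_append]
        exact (hmemN z).mp hz (l ++ [i])
      have hS := thmS (dCL d) hsimple' hker hone N hNstab ((hmemN x).mpr hx)
      have hle : N.comap incl ≤ I := by
        intro a ha
        have h0 := (hmemN _).mp (Ideal.mem_comap.mp ha) []
        erw [derWord_nil, hia] at h0
        rw [Ideal.mem_comap, hj1] at h0
        exact h0
      exact Ideal.map_mono hle hS
    · intro hx l
      have hmem : derWord D l x ∈ I.map incl := by
        induction l with
        | nil => exact hx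
        | cons i l ih =>
          erw [derWord_cons, hDl]
          exact hstab I i _ ih
      exact Ideal.mem_comap.mpr (hjmap I _ hmem)
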